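/- Let p, q ≥ 1 and n = p·q. Let x ∈ ℝⁿ be partitioned into q blocks x_j ∈ ℝᵖ (j = 0,…,q−1, each block indexed cyclically by ZMod p), and for i, j ∈ {0,…,q−1} let c_{i,j} ∈ ℝᵖ. Let B be the block circulant matrix whose (i,j) block is circ(c_{i,j}), let h = B·x, so the i-th block of h is h_i = Σ_{j} circ(c_{i,j})·x_j, and let f : ℝⁿ → ℝ be differentiable at h. Define g({c_{i,j}}) = f(B·x). Then for every block position (i,j), min over k ∈ ZMod p of the partial derivative of g with respect to (c_{i,j})_k, which equals Σ_{m ∈ ZMod p} ((∇f(h))_i)_m · (x_j)_{m-k}, is at least p · (min over all (r, s) with r ∈ {0,…,n−1}, s ∈ {0,…,n−1} of (∇f(h))_r · x_s), i.e. at least p times the smallest entry of the dense-matrix gradient ∇f(h)·xᵀ. -/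

import Mathlib

open InnerProductSpace

noncomputable def Lmap (p q : ℕ) [NeZero p] [NeZero q] (x : EuclideanSpace ℝ (ZMod q × ZMod p)) :
    EuclideanSpace ℝ (ZMod q × ZMod q × ZMod p) →L[ℝ] EuclideanSpace ℝ (ZMod q × ZMod p) :=
  LinearMap.toContinuousLinearMap
  { toFun := fun C' => (WithLp.toLp 2 (fun im : ZMod q × ZMod p => ∑ j' : ZMod q, ∑ k' : ZMod p,
      C' (im.1, j', im.2 - k') * x (j', k')) : EuclideanSpace ℝ (ZMod q × ZMod p))
    map_add' := by
      intro a b; ext im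
      simp [add_mul, Finset.sum_add_distrib]
    map_smul' := by
      intro r a; ext im
      simp [Finset.mul_sum, mul_assoc] }

lemma Lmap_single (p q : ℕ) [NeZero p] [NeZero q]
    (x : EuclideanSpace ℝ (ZMod q × ZMod p)) (i j : ZMod q) (k : ZMod p) :
    (Lmap p q x) (EuclideanSpace.single (i, j, k) 1)
      = (WithLp.toLp 2 (fun im : ZMod q × ZMod p => if im.1 = i then x (j, im.2 - k) else 0) : EuclideanSpace ℝ (ZMod q × ZMod p)) := by
  ext im
  obtain ⟨i', m⟩ := im
  show ∑ j' : ZMod q, ∑ k' : ZMod p,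
      EuclideanSpace.single (i, j, k) (1:ℝ) (i', j', m - k') * x (j', k') = if i' = i then x (j, m - k) else 0
  simp only [EuclideanSpace.single_apply, Prod.mk.injEq]
  rcases eq_or_ne i' i with rfl | hne
  · simp only [if_pos rfl, true_and]
    rw [Finset.sum_eq_single j]
    · rw [Finset.sum_eq_single (m - k)]
      · simp [sub_sub_cancel]
      · intro b _ hb
        rw [if_neg, zero_mul]
        rintro ⟨-, h2⟩
        exact hb (by rw [← h2]; ring)
      · simp
    · intro b _ hb
      apply Finset.sum_eq_zero
      intro c _
      rw [if_neg, zero_mul]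
      rintro ⟨h1, -⟩
      exact hb h1
    · simp
  · simp [hne]

lemma grad_inner_eq {E : Type*} [NormedAddCommGroup E] [InnerProductSpace ℝ E]
    [CompleteSpace E] (u : E) (g : E → ℝ) (z : E) :
    ⟪gradient g z, u⟫_ℝ = fderiv ℝ g z u := by
  rw [gradient, ← toDual_apply_apply]
  simp

lemma grad_entry (p q : ℕ) [NeZero p] [NeZero q]
    (x h : EuclideanSpace ℝ (ZMod q × ZMod p))
    (C : EuclideanSpace ℝ (ZMod q × ZMod q × ZMod p))
    (hh : Lmap p q x C = h)
    (f : EuclideanSpace ℝ (ZMod q × ZMod p) → ℝ)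
    (hf : DifferentiableAt ℝ f h) (i j : ZMod q) (k : ZMod p) :
    gradient (f ∘ Lmap p q x) C (i, j, k)
      = ∑ m : ZMod p, gradient f h (i, m) * x (j, m - k) := by
  have hfC : DifferentiableAt ℝ f ((Lmap p q x) C) := by rw [hh]; exact hf
  have hdiff : DifferentiableAt ℝ (Lmap p q x) C := (Lmap p q x).differentiableAt
  have hfd : fderiv ℝ (f ∘ Lmap p q x) C = (fderiv ℝ f h).comp (Lmap p q x : _ →L[ℝ] _) := by
    rw [fderiv_comp C hfC hdiff, (Lmap p q x).fderiv, hh]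
  have h1 : gradient (f ∘ Lmap p q x) C (i, j, k)
      = ⟪gradient (f ∘ Lmap p q x) C, EuclideanSpace.single (i, j, k) (1:ℝ)⟫_ℝ := by
    rw [EuclideanSpace.inner_single_right]; simp
  rw [h1, grad_inner_eq, hfd, ContinuousLinearMap.comp_apply, ← grad_inner_eq, Lmap_single]
  rw [PiLp.inner_apply]
  rw [Fintype.sum_prod_type]
  rw [Finset.sum_eq_single i]
  · apply Finset.sum_congr rfl
    intro m _
    simp [mul_comm]
  · intro b _ hb
    apply Finset.sum_eq_zero
    intro m _
    simp [hb]
  · simp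

/-- Block circulant case, `n = p·q`. Vectors are indexed by
`ZMod q × ZMod p` (block index, position inside block); the parameters `c_{i,j} ∈ ℝᵖ`
are flattened into `C : ℝ^{q×q×p}`. With `h = B·x` where `B` is the block circulant
matrix with blocks `circ(c_{i,j})` (so `h_{(i,m)} = Σ_j Σ_k C_{(i,j,m-k)}·x_{(j,k)}`),
and `f` differentiable at `h`, for every block position `(i,j)`: each partial
derivative of `g(C) = f(B·x)` in `(c_{i,j})_k` equals `Σ_m (∇f(h))_{(i,m)}·x_{(j,m-k)}`,
and its minimum over `k` is at least `p` times the smallest entry of the dense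
gradient `∇f(h)·xᵀ`. -/
theorem block_circulant_gradient_min_ge (p q : ℕ) [NeZero p] [NeZero q]
    (n : ℕ) (hn : n = p * q)
    (x h : EuclideanSpace ℝ (ZMod q × ZMod p))
    (C : EuclideanSpace ℝ (ZMod q × ZMod q × ZMod p))
    (hh : ∀ (i : ZMod q) (m : ZMod p),
      h (i, m) = ∑ j : ZMod q, ∑ k : ZMod p, C (i, j, m - k) * x (j, k))
    (f : EuclideanSpace ℝ (ZMod q × ZMod p) → ℝ)
    (hf : DifferentiableAt ℝ f h)
    (i j : ZMod q) :
    (∀ k : ZMod p,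
        gradient (fun C' : EuclideanSpace ℝ (ZMod q × ZMod q × ZMod p) =>
            f (WithLp.toLp 2 (fun im : ZMod q × ZMod p =>
              ∑ j' : ZMod q, ∑ k' : ZMod p, C' (im.1, j', im.2 - k') * x (j', k')))) C (i, j, k)
          = ∑ m : ZMod p, gradient f h (i, m) * x (j, m - k)) ∧
      Finset.univ.inf' Finset.univ_nonempty
          (fun k : ZMod p =>
            gradient (fun C' : EuclideanSpace ℝ (ZMod q × ZMod q × ZMod p) =>
              f (WithLp.toLp 2 (fun im : ZMod q × ZMod p =>
                ∑ j' : ZMod q, ∑ k' : ZMod p, C' (im.1, j', im.2 - k') * x (j', k')))) C (i, j, k))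
        ≥ (p : ℝ) * Finset.univ.inf' Finset.univ_nonempty
          (fun rs : (ZMod q × ZMod p) × (ZMod q × ZMod p) =>
            gradient f h rs.1 * x rs.2) := by
  have hLC : Lmap p q x C = h := by
    ext im
    obtain ⟨i', m⟩ := im
    exact (hh i' m).symm
  have hg : (fun C' : EuclideanSpace ℝ (ZMod q × ZMod q × ZMod p) =>
        f (WithLp.toLp 2 (fun im : ZMod q × ZMod p =>
          ∑ j' : ZMod q, ∑ k' : ZMod p, C' (im.1, j', im.2 - k') * x (j', k'))))
      = f ∘ Lmap p q x := rfl
  have key : ∀ k : ZMod p,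
      gradient (fun C' : EuclideanSpace ℝ (ZMod q × ZMod q × ZMod p) =>
          f (WithLp.toLp 2 (fun im : ZMod q × ZMod p =>
            ∑ j' : ZMod q, ∑ k' : ZMod p, C' (im.1, j', im.2 - k') * x (j', k')))) C (i, j, k)
        = ∑ m : ZMod p, gradient f h (i, m) * x (j, m - k) := by
    intro k
    rw [hg]
    exact grad_entry p q x h C hLC f hf i j k
  refine ⟨key, ?_⟩
  set M := Finset.univ.inf' Finset.univ_nonempty
    (fun rs : (ZMod q × ZMod p) × (ZMod q × ZMod p) => gradient f h rs.1 * x rs.2) with hM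
  apply Finset.le_inf'
  intro k _
  rw [key k]
  calc (p : ℝ) * M = ∑ _m : ZMod p, M := by
        rw [Finset.sum_const, Finset.card_univ, ZMod.card, nsmul_eq_mul]
    _ ≤ ∑ m : ZMod p, gradient f h (i, m) * x (j, m - k) := by
        apply Finset.sum_le_sum
        intro m _
        exact Finset.inf'_le _ (Finset.mem_univ ((i, m), (j, m - k)))
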